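/- Let H ∈ (1/2, 1) and define ρ(z) = ∫_{1/z}^1 (y^{-2H} R(y,1) - H log(1/y) - H β(y/(1-y))) (1-y)^{2H-2} dy, where R(y,1) = (1/2)(y^{2H} + 1 - (1-y)^{2H}) and β(y) = ∫₀¹(1-x)^{2H-1}(x+y)^{-2H} dx. Then the limit ρ(∞) = ∫₀¹ (y^{-2H} R(y,1) - H log(1/y) - H β(y/(1-y)))(1-y)^{2H-2} dy exists and is finite. -/
import Mathlib


open MeasureTheory Set

set_option maxHeartbeats 1000000 in
/-- For `H ∈ (1/2,1)`, the integral defining `ρ(∞)`, namely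
`∫₀¹ (y^{-2H} R(y,1) - H log(1/y) - H β(y/(1-y)))(1-y)^{2H-2} dy`,
converges absolutely. -/
theorem rho_infty_integrable (H : ℝ) (hH : H ∈ Set.Ioo (1/2 : ℝ) 1) :
    IntegrableOn
      (fun y : ℝ =>
        (y ^ (-(2*H)) * ((1/2 : ℝ) * (y ^ (2*H) + 1 - (1 - y) ^ (2*H)))
          - H * Real.log (1/y)
          - H * ∫ x in (0:ℝ)..1, (1 - x) ^ (2*H - 1) * (x + y/(1 - y)) ^ (-(2*H)))
        * (1 - y) ^ (2*H - 2))
      (Set.Ioo (0:ℝ) 1) := by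
  obtain ⟨hH1, hH2⟩ := hH
  have hd : (0:ℝ) < 2*H - 1 := by linarith
  have hHpos : (0:ℝ) < H := by linarith
  set K : ℝ := 4 * (1/2 + H + 2*H/(2*H-1)) with hKdef
  have hK1pos : (0:ℝ) < 1/2 + H + 2*H/(2*H-1) := by
    have : 0 < 2*H/(2*H-1) := div_pos (by linarith) hd
    linarith
  -- the dominating function
  set g : ℝ → ℝ := fun y => K * (y ^ (1 - 2*H) + (1 - y) ^ (2*H - 2)) with hgdef
  have hg : IntegrableOn g (Ioo (0:ℝ) 1) := by
    have h1 : IntegrableOn (fun y : ℝ => y ^ (1 - 2*H)) (Ioo (0:ℝ) 1) :=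
      (intervalIntegrable_iff_integrableOn_Ioo_of_le zero_le_one).mp
        (intervalIntegral.intervalIntegrable_rpow' (by linarith))
    have h2 : IntegrableOn (fun y : ℝ => (1 - y) ^ (2*H - 2)) (Ioo (0:ℝ) 1) := by
      have h0 : IntervalIntegrable (fun x : ℝ => x ^ (2*H - 2)) volume 0 1 :=
        intervalIntegral.intervalIntegrable_rpow' (by linarith)
      have h3 := (h0.comp_sub_left 1).symm
      simp only [sub_zero, sub_self] at h3
      exact (intervalIntegrable_iff_integrableOn_Ioo_of_le zero_le_one).mp h3
    exact ((h1.add h2).const_mul K)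
  -- measurability
  have hβmeas : StronglyMeasurable (fun y : ℝ =>
      ∫ x in (0:ℝ)..1, (1 - x) ^ (2*H - 1) * (x + y/(1 - y)) ^ (-(2*H))) := by
    have key : StronglyMeasurable (fun y : ℝ =>
        ∫ x in Ioc (0:ℝ) 1, (1 - x) ^ (2*H - 1) * (x + y/(1 - y)) ^ (-(2*H))) := by
      apply MeasureTheory.StronglyMeasurable.integral_prod_right
        (f := fun y x : ℝ => (1 - x) ^ (2*H - 1) * (x + y/(1 - y)) ^ (-(2*H)))
      apply Measurable.stronglyMeasurable
      fun_prop
    have heq : (fun y : ℝ => ∫ x in (0:ℝ)..1, (1 - x) ^ (2*H - 1) * (x + y/(1 - y)) ^ (-(2*H)))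
        = (fun y : ℝ => ∫ x in Ioc (0:ℝ) 1, (1 - x) ^ (2*H - 1) * (x + y/(1 - y)) ^ (-(2*H))) := by
      funext y; exact intervalIntegral.integral_of_le zero_le_one
    rw [heq]; exact key
  have hmeas : AEStronglyMeasurable (fun y : ℝ =>
      (y ^ (-(2*H)) * ((1/2 : ℝ) * (y ^ (2*H) + 1 - (1 - y) ^ (2*H)))
        - H * Real.log (1/y)
        - H * ∫ x in (0:ℝ)..1, (1 - x) ^ (2*H - 1) * (x + y/(1 - y)) ^ (-(2*H)))
      * (1 - y) ^ (2*H - 2)) (volume.restrict (Ioo (0:ℝ) 1)) := by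
    apply AEStronglyMeasurable.mul
    · apply AEStronglyMeasurable.sub
      · apply AEStronglyMeasurable.sub
        · apply Measurable.aestronglyMeasurable; fun_prop
        · exact ((Real.measurable_log.comp
            (measurable_const.div measurable_id)).const_mul H).aestronglyMeasurable
      · exact (hβmeas.measurable.const_mul H).aestronglyMeasurable
    · apply Measurable.aestronglyMeasurable; fun_prop
  -- main domination argument
  apply Integrable.mono' hg hmeas
  rw [ae_restrict_iff' measurableSet_Ioo]
  filter_upwards with y hy
  obtain ⟨hy0, hy1⟩ := hy
  have h1y : (0:ℝ) < 1 - y := by linarith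
  -- basic rpow facts
  have hya1 : (1:ℝ) ≤ y ^ (1 - 2*H) :=
    Real.one_le_rpow_of_pos_of_le_one_of_nonpos hy0 hy1.le (by linarith)
  have hya0 : (0:ℝ) ≤ y ^ (1 - 2*H) := by linarith
  have hD0 : (0:ℝ) ≤ (1 - y) ^ (2*H - 2) := Real.rpow_nonneg h1y.le _
  have hPnn : (0:ℝ) ≤ y ^ (-(2*H)) := Real.rpow_nonneg hy0.le _
  have e1 : y ^ (-(2*H)) * y ^ (2*H) = 1 := by
    rw [← Real.rpow_add hy0]; norm_num
  have e2 : y ^ (1 - 2*H) = y ^ (-(2*H)) * y := by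
    rw [show (1 - 2*H) = -(2*H) + 1 by ring, Real.rpow_add hy0, Real.rpow_one]
  -- (i) bound on the first term
  have bern : 1 - 2*H*y ≤ (1 - y) ^ (2*H) := by
    have h' := one_add_mul_self_le_rpow_one_add (s := -y) (by linarith) (p := 2*H) (by linarith)
    rw [show (1 + -y) = 1 - y by ring] at h'
    linarith
  have hle1 : (1 - y) ^ (2*H) ≤ 1 := Real.rpow_le_one h1y.le (by linarith) (by linarith)
  have hy2H0 : (0:ℝ) ≤ y ^ (2*H) := Real.rpow_nonneg hy0.le _
  have hA0 : 0 ≤ y ^ (-(2*H)) * ((1/2 : ℝ) * (y ^ (2*H) + 1 - (1 - y) ^ (2*H))) := by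
    apply mul_nonneg hPnn; linarith
  have hAub : y ^ (-(2*H)) * ((1/2 : ℝ) * (y ^ (2*H) + 1 - (1 - y) ^ (2*H)))
      ≤ 1/2 + H * y ^ (1 - 2*H) := by
    calc y ^ (-(2*H)) * ((1/2 : ℝ) * (y ^ (2*H) + 1 - (1 - y) ^ (2*H)))
        ≤ y ^ (-(2*H)) * ((1/2 : ℝ) * (y ^ (2*H) + 2*H*y)) := by
          apply mul_le_mul_of_nonneg_left (by linarith) hPnn
      _ = 1/2 * (y ^ (-(2*H)) * y ^ (2*H)) + H * (y ^ (-(2*H)) * y) := by ring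
      _ = 1/2 + H * y ^ (1 - 2*H) := by rw [e1, ← e2]; ring
  -- (ii) bound on the log term
  have hlog0 : 0 ≤ Real.log (1/y) := Real.log_nonneg (by rw [le_div_iff₀ hy0]; linarith)
  have hlogub : Real.log (1/y) ≤ y ^ (1 - 2*H) / (2*H - 1) := by
    have h1 : Real.log (y ^ (1 - 2*H)) ≤ y ^ (1 - 2*H) - 1 :=
      Real.log_le_sub_one_of_pos (Real.rpow_pos_of_pos hy0 _)
    rw [Real.log_rpow hy0] at h1
    have h2 : Real.log (1/y) = - Real.log y := by rw [one_div, Real.log_inv]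
    rw [h2, le_div_iff₀ hd]
    nlinarith [hya1]
  -- (iii) bound on the beta term
  set z : ℝ := y / (1 - y) with hzdef
  have hz : 0 < z := div_pos hy0 h1y
  have cont1 : ContinuousOn (fun x : ℝ => (1 - x) ^ (2*H - 1)) (Icc (0:ℝ) 1) := by
    apply ContinuousOn.rpow_const (by fun_prop)
    intro x _; right; linarith
  have cont2 : ContinuousOn (fun x : ℝ => (x + z) ^ (-(2*H))) (Icc (0:ℝ) 1) := by
    apply ContinuousOn.rpow_const (by fun_prop)
    intro x hx; left
    have := hx.1
    positivity
  have int_f : IntervalIntegrable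
      (fun x : ℝ => (1 - x) ^ (2*H - 1) * (x + z) ^ (-(2*H))) volume 0 1 := by
    apply ContinuousOn.intervalIntegrable
    rw [uIcc_of_le zero_le_one]; exact cont1.mul cont2
  have int_g2 : IntervalIntegrable (fun x : ℝ => (x + z) ^ (-(2*H))) volume 0 1 := by
    apply ContinuousOn.intervalIntegrable
    rw [uIcc_of_le zero_le_one]; exact cont2
  have hβ0 : 0 ≤ ∫ x in (0:ℝ)..1, (1 - x) ^ (2*H - 1) * (x + z) ^ (-(2*H)) := by
    apply intervalIntegral.integral_nonneg zero_le_one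
    intro u hu
    exact mul_nonneg (Real.rpow_nonneg (by linarith [hu.2]) _)
      (Real.rpow_nonneg (by linarith [hu.1, hz]) _)
  have hβ1 : (∫ x in (0:ℝ)..1, (1 - x) ^ (2*H - 1) * (x + z) ^ (-(2*H)))
      ≤ ∫ x in (0:ℝ)..1, (x + z) ^ (-(2*H)) := by
    apply intervalIntegral.integral_mono_on zero_le_one int_f int_g2
    intro x hx
    have hxz : (0:ℝ) ≤ (x + z) ^ (-(2*H)) := Real.rpow_nonneg (by linarith [hx.1, hz]) _
    have hle : (1 - x) ^ (2*H - 1) ≤ 1 :=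
      Real.rpow_le_one (by linarith [hx.2]) (by linarith [hx.1]) (by linarith)
    exact mul_le_of_le_one_left hxz hle
  have hβ2 : (∫ x in (0:ℝ)..1, (x + z) ^ (-(2*H)))
      = ((1 + z) ^ (1 - 2*H) - z ^ (1 - 2*H)) / (1 - 2*H) := by
    rw [show (∫ x in (0:ℝ)..1, (x + z) ^ (-(2*H)))
        = ∫ u in (0+z)..(1+z), u ^ (-(2*H)) from
      intervalIntegral.integral_comp_add_right (fun u : ℝ => u ^ (-(2*H))) z]
    rw [zero_add]
    rw [integral_rpow (Or.inr ⟨show -(2*H) ≠ -1 by intro h; linarith,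
      by rw [uIcc_of_le (by linarith : z ≤ 1 + z)]
         intro hmem
         exact absurd hmem.1 (not_le.mpr hz)⟩)]
    have he : -(2*H) + 1 = 1 - 2*H := by ring
    rw [he]
  have hβ3 : ((1 + z) ^ (1 - 2*H) - z ^ (1 - 2*H)) / (1 - 2*H) ≤ z ^ (1 - 2*H) / (2*H - 1) := by
    have hV : ((1 + z) ^ (1 - 2*H) - z ^ (1 - 2*H)) / (1 - 2*H)
        = (z ^ (1 - 2*H) - (1 + z) ^ (1 - 2*H)) / (2*H - 1) := by
      rw [div_eq_div_iff (by linarith : (1 - 2*H) ≠ 0) (by linarith : (2*H - 1) ≠ 0)]; ring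
    rw [hV]
    have hw : 0 ≤ (1 + z) ^ (1 - 2*H) := Real.rpow_nonneg (by linarith) _
    gcongr
    linarith
  have hzpow : z ^ (1 - 2*H) ≤ y ^ (1 - 2*H) := by
    have h1 : (1:ℝ) ≤ (1 - y) ^ (1 - 2*H) :=
      Real.one_le_rpow_of_pos_of_le_one_of_nonpos h1y (by linarith) (by linarith)
    rw [hzdef, Real.div_rpow hy0.le h1y.le]
    exact div_le_self hya0 h1
  have hβub : (∫ x in (0:ℝ)..1, (1 - x) ^ (2*H - 1) * (x + z) ^ (-(2*H)))
      ≤ y ^ (1 - 2*H) / (2*H - 1) := by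
    calc (∫ x in (0:ℝ)..1, (1 - x) ^ (2*H - 1) * (x + z) ^ (-(2*H)))
        ≤ ∫ x in (0:ℝ)..1, (x + z) ^ (-(2*H)) := hβ1
      _ = ((1 + z) ^ (1 - 2*H) - z ^ (1 - 2*H)) / (1 - 2*H) := hβ2
      _ ≤ z ^ (1 - 2*H) / (2*H - 1) := hβ3
      _ ≤ y ^ (1 - 2*H) / (2*H - 1) := by gcongr
  -- combine the three bounds
  have hB0 : 0 ≤ H * Real.log (1/y) := mul_nonneg hHpos.le hlog0
  have hC0 : 0 ≤ H * ∫ x in (0:ℝ)..1, (1 - x) ^ (2*H - 1) * (x + z) ^ (-(2*H)) :=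
    mul_nonneg hHpos.le hβ0
  have hBub : H * Real.log (1/y) ≤ H/(2*H-1) * y ^ (1 - 2*H) := by
    calc H * Real.log (1/y) ≤ H * (y ^ (1 - 2*H) / (2*H-1)) :=
          mul_le_mul_of_nonneg_left hlogub hHpos.le
      _ = H/(2*H-1) * y ^ (1 - 2*H) := by ring
  have hCub : H * (∫ x in (0:ℝ)..1, (1 - x) ^ (2*H - 1) * (x + z) ^ (-(2*H)))
      ≤ H/(2*H-1) * y ^ (1 - 2*H) := by
    calc H * (∫ x in (0:ℝ)..1, (1 - x) ^ (2*H - 1) * (x + z) ^ (-(2*H)))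
        ≤ H * (y ^ (1 - 2*H) / (2*H-1)) := mul_le_mul_of_nonneg_left hβub hHpos.le
      _ = H/(2*H-1) * y ^ (1 - 2*H) := by ring
  have hHd0 : 0 ≤ H/(2*H-1) := div_nonneg hHpos.le hd.le
  have habs : |y ^ (-(2*H)) * ((1/2 : ℝ) * (y ^ (2*H) + 1 - (1 - y) ^ (2*H)))
      - H * Real.log (1/y)
      - H * ∫ x in (0:ℝ)..1, (1 - x) ^ (2*H - 1) * (x + z) ^ (-(2*H))|
      ≤ (1/2 + H + 2*H/(2*H-1)) * y ^ (1 - 2*H) := by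
    have exp : (1/2 + H + 2*H/(2*H-1)) * y ^ (1 - 2*H)
        = (1/2) * y ^ (1 - 2*H) + H * y ^ (1 - 2*H) + 2 * (H/(2*H-1) * y ^ (1 - 2*H)) := by
      ring
    rw [abs_le]
    constructor
    · linarith [hA0, hBub, hCub, mul_nonneg (by norm_num : (0:ℝ) ≤ 1/2) hya0,
        mul_nonneg hHpos.le hya0, mul_nonneg hHd0 hya0, exp]
    · linarith [hAub, hB0, hC0, hya1, mul_nonneg hHd0 hya0, mul_nonneg hHpos.le hya0, exp]
  have hprod : y ^ (1 - 2*H) * (1 - y) ^ (2*H - 2)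
      ≤ 4 * (y ^ (1 - 2*H) + (1 - y) ^ (2*H - 2)) := by
    have h4 : ((1:ℝ)/2) ^ (-2:ℝ) = 4 := by
      rw [show (-2:ℝ) = ((-2:ℤ):ℝ) by norm_num, Real.rpow_intCast]
      norm_num
    rcases le_total y (1/2) with h | h
    · have hb1 : (1 - y) ^ (2*H - 2) ≤ ((1:ℝ)/2) ^ (2*H - 2) :=
        Real.rpow_le_rpow_of_nonpos (by norm_num) (by linarith) (by linarith)
      have hb2 : ((1:ℝ)/2) ^ (2*H - 2) ≤ ((1:ℝ)/2) ^ (-2:ℝ) :=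
        Real.rpow_le_rpow_of_exponent_ge (by norm_num) (by norm_num) (by linarith)
      nlinarith [mul_le_mul_of_nonneg_left (hb1.trans (h4 ▸ hb2)) hya0, hD0, hya0]
    · have hb1 : y ^ (1 - 2*H) ≤ ((1:ℝ)/2) ^ (1 - 2*H) :=
        Real.rpow_le_rpow_of_nonpos (by norm_num) (by linarith) (by linarith)
      have hb2 : ((1:ℝ)/2) ^ (1 - 2*H) ≤ ((1:ℝ)/2) ^ (-2:ℝ) :=
        Real.rpow_le_rpow_of_exponent_ge (by norm_num) (by norm_num) (by linarith)
      nlinarith [mul_le_mul_of_nonneg_right (hb1.trans (h4 ▸ hb2)) hD0, hD0, hya0]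
  -- put everything together
  rw [Real.norm_eq_abs, abs_mul, abs_of_nonneg hD0]
  calc |y ^ (-(2*H)) * ((1/2 : ℝ) * (y ^ (2*H) + 1 - (1 - y) ^ (2*H)))
        - H * Real.log (1/y)
        - H * ∫ x in (0:ℝ)..1, (1 - x) ^ (2*H - 1) * (x + z) ^ (-(2*H))|
        * (1 - y) ^ (2*H - 2)
      ≤ ((1/2 + H + 2*H/(2*H-1)) * y ^ (1 - 2*H)) * (1 - y) ^ (2*H - 2) :=
        mul_le_mul_of_nonneg_right habs hD0
    _ = (1/2 + H + 2*H/(2*H-1)) * (y ^ (1 - 2*H) * (1 - y) ^ (2*H - 2)) := by ring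
    _ ≤ (1/2 + H + 2*H/(2*H-1)) * (4 * (y ^ (1 - 2*H) + (1 - y) ^ (2*H - 2))) :=
        mul_le_mul_of_nonneg_left hprod hK1pos.le
    _ = g y := by rw [hgdef, hKdef]; ring
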